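/- Let S₁, …, S_{n+1} be real-valued random variables on a probability space whose joint distribution is exchangeable, and assume additionally that the scores are almost surely pairwise distinct, i.e., P(S_i = S_j) = 0 for all i ≠ j. Let α ∈ (0,1), set k = ⌈(n+1)(1−α)⌉, assume k ≤ n, and let q̂ be the k-th smallest value among S₁, …, S_n. Then P(S_{n+1} ≤ q̂) ≤ 1 − α + 1/(n+1). -/

import Mathlib

open MeasureTheory
open scoped ENNReal

/-- The `k`-th smallest value (k-th order statistic, 1-indexed) among
`v 0, …, v (n-1)`. -/
noncomputable def kthSmallest (n : ℕ) (k : ℕ) (v : Fin n → ℝ) : ℝ :=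
  ((List.ofFn v).mergeSort (fun a b => a ≤ b)).getD (k - 1) 0


lemma cnt_castSucc (n : ℕ) (v : Fin (n+1) → ℝ) :
    (Finset.univ.filter fun i : Fin n => v i.castSucc < v (Fin.last n)).card
      = (Finset.univ.filter fun j : Fin (n+1) => v j < v (Fin.last n)).card := by
  rw [Fin.univ_castSuccEmb, Finset.filter_cons]
  simp only [lt_irrefl, if_false, Finset.filter_map, Finset.card_map]
  rfl


lemma card_filter_eq_countP {n : ℕ} (w : Fin n → ℝ) (p : ℝ → Prop) [DecidablePred p] :
    (Finset.univ.filter fun i => p (w i)).card = (List.ofFn w).countP (fun a => decide (p a)) := by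
  rw [List.ofFn_eq_map, List.countP_map, Fin.univ_def, Finset.filter, Finset.card]
  simp only [Multiset.quot_mk_to_coe, Multiset.filter_coe, Multiset.coe_card,
    List.countP_eq_length_filter]
  rfl

lemma le_kthSmallest_iff {n k : ℕ} (hk1 : 1 ≤ k) (hkn : k ≤ n) (w : Fin n → ℝ) (t : ℝ) :
    t ≤ kthSmallest n k w ↔ (Finset.univ.filter fun i => w i < t).card < k := by
  set l := (List.ofFn w).mergeSort (fun a b => a ≤ b) with hl
  have hlen : l.length = n := by simp [hl, List.length_mergeSort]
  have hsort : List.Pairwise (· ≤ ·) l := List.pairwise_mergeSort' _ _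
  have hperm : l.Perm (List.ofFn w) := List.mergeSort_perm _ _
  have hklt : k - 1 < l.length := by omega
  have hq : kthSmallest n k w = l[k-1] := by
    rw [kthSmallest, ← hl, List.getD_eq_getElem _ _ hklt]
  set q := l[k-1]'hklt with hqdef
  have hcnt : ∀ (p : ℝ → Prop) [DecidablePred p],
      (Finset.univ.filter fun i => p (w i)).card = l.countP (fun a => decide (p a)) := by
    intro p _
    rw [card_filter_eq_countP, (hperm.countP_eq _)]
  constructor
  · intro ht
    rw [hcnt (fun x => x < t)]
    -- count of (· < t) ≤ count of (· < q) ≤ k - 1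
    have h1 : l.countP (fun a => decide (a < t)) ≤ l.countP (fun a => decide (a < q)) := by
      apply List.countP_mono_left
      intro a _ ha
      simp only [decide_eq_true_eq] at ha ⊢
      rw [hq] at ht
      exact lt_of_lt_of_le ha ht
    have h2 : l.countP (fun a => decide (a < q)) ≤ k - 1 := by
      conv_lhs => rw [← List.take_append_drop (k-1) l]
      rw [List.countP_append]
      have hz : (l.drop (k-1)).countP (fun a => decide (a < q)) = 0 := by
        rw [List.countP_eq_zero]
        intro a ha
        rw [List.mem_iff_getElem] at ha
        obtain ⟨i, hi, rfl⟩ := ha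
        rw [List.getElem_drop]
        simp only [decide_eq_true_eq, not_lt]
        exact hsort.rel_get_of_le (a := ⟨k-1, hklt⟩) (b := ⟨k-1+i, by simp only [List.length_drop] at hi; omega⟩) (by simp)
      have := List.countP_le_length (p := fun a => decide (a < q)) (l := l.take (k-1))
      simp only [List.length_take] at this
      omega
    omega
  · intro hc
    by_contra ht
    push_neg at ht
    rw [hq] at ht
    -- all of take k are ≤ q < t, so count ≥ k
    have h3 : k ≤ l.countP (fun a => decide (a < t)) := by
      have hsub : (l.take k).Sublist l := List.take_sublist _ _
      have hall : (l.take k).countP (fun a => decide (a < t)) = (l.take k).length := by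
        rw [List.countP_eq_length]
        intro a ha
        rw [List.mem_iff_getElem] at ha
        obtain ⟨i, hi, rfl⟩ := ha
        rw [List.getElem_take]
        simp only [decide_eq_true_eq]
        have hile : i ≤ k - 1 := by
          simp only [List.length_take] at hi; omega
        have : l[i]'(by omega) ≤ q := by
          rcases lt_or_eq_of_le hile with h | h
          · exact hsort.rel_get_of_lt (a := ⟨i, by omega⟩) (b := ⟨k-1, hklt⟩) h
          · subst h; rfl
        exact lt_of_le_of_lt this ht
      have hlen2 : (l.take k).length = k := by simp [List.length_take]; omega
      calc k = (l.take k).countP (fun a => decide (a < t)) := by rw [hall, hlen2]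
        _ ≤ l.countP _ := hsub.countP_le
    rw [hcnt (fun x => x < t)] at hc
    omega

/-- number of coordinates strictly below coordinate `i` -/
noncomputable def cntB {m : ℕ} (i : Fin m) (v : Fin m → ℝ) : ℕ :=
  (Finset.univ.filter fun j => v j < v i).card

lemma cntB_lt {m : ℕ} (i : Fin m) (v : Fin m → ℝ) : cntB i v < m := by
  have hsub : (Finset.univ.filter fun j => v j < v i) ⊆ Finset.univ.erase i := by
    intro j hj
    simp only [Finset.mem_filter] at hj
    refine Finset.mem_erase.2 ⟨?_, Finset.mem_univ _⟩
    rintro rfl; exact lt_irrefl _ hj.2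
  have h1 := Finset.card_le_card hsub
  have hc : (Finset.univ.erase i).card = m - 1 := by
    rw [Finset.card_erase_of_mem (Finset.mem_univ _), Finset.card_univ, Fintype.card_fin]
  have hm : 0 < m := i.pos
  unfold cntB
  omega

lemma cntB_strictMono {m : ℕ} {i i' : Fin m} (v : Fin m → ℝ) (h : v i < v i') :
    cntB i v < cntB i' v := by
  apply Finset.card_lt_card
  rw [Finset.ssubset_iff_of_subset]
  · exact ⟨i, Finset.mem_filter.2 ⟨Finset.mem_univ _, h⟩,
      fun hmem => lt_irrefl _ (Finset.mem_filter.1 hmem).2⟩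
  · intro j hj
    simp only [Finset.mem_filter] at hj ⊢
    exact ⟨hj.1, hj.2.trans h⟩

lemma cntB_bijective {m : ℕ} (v : Fin m → ℝ) (hv : Function.Injective v) :
    Function.Bijective (fun i : Fin m => (⟨cntB i v, cntB_lt i v⟩ : Fin m)) := by
  rw [Fintype.bijective_iff_injective_and_card]
  refine ⟨fun i i' hii => ?_, rfl⟩
  by_contra hne
  have hvne : v i ≠ v i' := fun h => hne (hv h)
  rcases lt_or_gt_of_ne hvne with h | h
  · exact absurd (congrArg Fin.val hii) (Nat.ne_of_lt (cntB_strictMono v h))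
  · exact absurd (congrArg Fin.val hii) (Nat.ne_of_gt (cntB_strictMono v h))

lemma cntB_exists {m : ℕ} (v : Fin m → ℝ) (hv : Function.Injective v) {r : ℕ} (hr : r < m) :
    ∃ i, cntB i v = r := by
  obtain ⟨i, hi⟩ := (cntB_bijective v hv).2 ⟨r, hr⟩
  exact ⟨i, congrArg Fin.val hi⟩

lemma cntB_unique {m : ℕ} (v : Fin m → ℝ) (hv : Function.Injective v) {i i' : Fin m}
    (h : cntB i v = cntB i' v) : i = i' := by
  have := (cntB_bijective v hv).1 (a₁ := i) (a₂ := i') (by ext; exact h)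
  exact this

lemma measurable_cntB {m : ℕ} (i : Fin m) : Measurable fun v : Fin m → ℝ => cntB i v := by
  have : (fun v : Fin m → ℝ => cntB i v)
      = fun v => ∑ j : Fin m, if v j < v i then 1 else 0 := by
    funext v; exact Finset.card_filter _ _
  rw [this]
  exact Finset.measurable_sum _ fun j _ =>
    Measurable.ite (measurableSet_lt (measurable_pi_apply j) (measurable_pi_apply i))
      measurable_const measurable_const

lemma measurableSet_inj {m : ℕ} :
    MeasurableSet {v : Fin m → ℝ | Function.Injective v} := by
  have : {v : Fin m → ℝ | Function.Injective v}
      = ⋂ (i) (j) (_ : i ≠ j), {v | v i = v j}ᶜ := by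
    ext v
    simp only [Set.mem_setOf_eq, Set.mem_iInter, Set.mem_compl_iff, Function.Injective]
    constructor
    · intro h i j hij hv; exact hij (h hv)
    · intro h i j hv; by_contra hij; exact h i j hij hv
  rw [this]
  exact MeasurableSet.iInter fun i => MeasurableSet.iInter fun j => MeasurableSet.iInter
    fun _ => (measurableSet_eq_fun (measurable_pi_apply i) (measurable_pi_apply j)).compl

lemma cntB_comp_perm {m : ℕ} (σ : Equiv.Perm (Fin m)) (i : Fin m) (v : Fin m → ℝ) :
    cntB i (v ∘ σ) = cntB (σ i) v := by
  unfold cntB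
  exact Finset.card_equiv σ (fun a => by simp)

lemma inj_comp_perm {m : ℕ} (σ : Equiv.Perm (Fin m)) (v : Fin m → ℝ) :
    Function.Injective (v ∘ σ) ↔ Function.Injective v := by
  constructor
  · intro h
    have : v = (v ∘ σ) ∘ σ.symm := by funext j; simp
    rw [this]
    exact h.comp σ.symm.injective
  · exact fun h => h.comp σ.injective


/-- Conformal prediction upper coverage bound: for exchangeable, a.s. pairwise
distinct scores `S 0, …, S n`, with `q̂` the `⌈(n+1)(1-α)⌉`-th smallest of the
first `n` (calibration) scores, `P(S_{n+1} ≤ q̂) ≤ 1 - α + 1/(n+1)`. -/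
theorem conformal_coverage_upper_bound
    {Ω : Type*} [MeasurableSpace Ω] (P : Measure Ω) [IsProbabilityMeasure P]
    (n : ℕ) (S : Fin (n + 1) → Ω → ℝ) (hmeas : ∀ i, Measurable (S i))
    (hexch : ∀ σ : Equiv.Perm (Fin (n + 1)),
      Measure.map (fun ω => fun i => S (σ i) ω) P
        = Measure.map (fun ω => fun i => S i ω) P)
    (hdist : ∀ i j : Fin (n + 1), i ≠ j → P {ω | S i ω = S j ω} = 0)
    (α : ℝ) (hα : α ∈ Set.Ioo (0 : ℝ) 1)
    (hk : ⌈((n : ℝ) + 1) * (1 - α)⌉₊ ≤ n) :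
    P {ω | S (Fin.last n) ω ≤
        kthSmallest n (⌈((n : ℝ) + 1) * (1 - α)⌉₊) (fun i => S i.castSucc ω)}
      ≤ ENNReal.ofReal (1 - α + 1 / ((n : ℝ) + 1)) := by
  set k := ⌈((n : ℝ) + 1) * (1 - α)⌉₊ with hkdef
  obtain ⟨hα0, hα1⟩ := hα
  have hx0 : (0:ℝ) < ((n : ℝ) + 1) * (1 - α) := by
    have : (0:ℝ) < (n:ℝ) + 1 := by positivity
    nlinarith
  have hk1 : 1 ≤ k := Nat.ceil_pos.2 hx0
  -- joint map
  set T : Ω → (Fin (n+1) → ℝ) := fun ω i => S i ω with hT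
  have hTmeas : Measurable T := measurable_pi_lambda _ hmeas
  set μ : Measure (Fin (n+1) → ℝ) := P.map T with hμ
  have : IsProbabilityMeasure μ := Measure.isProbabilityMeasure_map hTmeas.aemeasurable
  -- the injective (all-distinct) set
  set I : Set (Fin (n+1) → ℝ) := {v | Function.Injective v} with hIdef
  have hImeas : MeasurableSet I := measurableSet_inj
  have hIc : μ Iᶜ = 0 := by
    have hsub : Iᶜ ⊆ ⋃ (i) (j) (_ : i ≠ j), {v : Fin (n+1) → ℝ | v i = v j} := by
      intro v hv
      simp only [hIdef, Set.mem_compl_iff, Set.mem_setOf_eq, Function.Injective, not_forall] at hv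
      obtain ⟨i, j, hij, hne⟩ := hv
      exact Set.mem_iUnion.2 ⟨i, Set.mem_iUnion.2 ⟨j, Set.mem_iUnion.2 ⟨hne, hij⟩⟩⟩
    refine measure_mono_null hsub ?_
    refine measure_iUnion_null fun i => measure_iUnion_null fun j => measure_iUnion_null fun hij => ?_
    rw [hμ, Measure.map_apply hTmeas
      (measurableSet_eq_fun (measurable_pi_apply i) (measurable_pi_apply j))]
    exact hdist i j hij
  -- level sets of the rank count
  set C : ℕ → Fin (n+1) → Set (Fin (n+1) → ℝ) := fun r i => {v | cntB i v = r} with hCdef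
  have hCmeas : ∀ r i, MeasurableSet (C r i) :=
    fun r i => measurable_cntB i (measurableSet_singleton r)
  -- exchangeability: all indices give equal measure
  have key1 : ∀ (r : ℕ) (i : Fin (n+1)), μ (I ∩ C r i) = μ (I ∩ C r (Fin.last n)) := by
    intro r i
    set σ := Equiv.swap i (Fin.last n) with hσ
    have hset : I ∩ C r i = (fun v : Fin (n+1) → ℝ => v ∘ σ) ⁻¹' (I ∩ C r (Fin.last n)) := by
      ext v
      simp only [Set.mem_inter_iff, Set.mem_preimage, hIdef, hCdef, Set.mem_setOf_eq,
        inj_comp_perm, cntB_comp_perm, hσ, Equiv.swap_apply_right]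
    have hmA : MeasurableSet (I ∩ C r (Fin.last n)) := hImeas.inter (hCmeas _ _)
    have hcomp : Measurable fun v : Fin (n+1) → ℝ => v ∘ σ :=
      measurable_pi_lambda _ fun j => measurable_pi_apply (σ j)
    have hσmeas : Measurable fun ω => (fun j => S (σ j) ω) :=
      measurable_pi_lambda _ fun j => hmeas (σ j)
    rw [hset, hμ, Measure.map_apply hTmeas (hcomp hmA)]
    have : T ⁻¹' ((fun v : Fin (n+1) → ℝ => v ∘ σ) ⁻¹' (I ∩ C r (Fin.last n)))
        = (fun ω => (fun j => S (σ j) ω)) ⁻¹' (I ∩ C r (Fin.last n)) := rfl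
    rw [this, ← Measure.map_apply hσmeas hmA, hexch σ]
  -- for r ≤ n, the measure of each rank level set is ≤ 1/(n+1)
  have key3 : ∀ r : ℕ, r ≤ n → μ (C r (Fin.last n)) ≤ (((n:ℝ≥0∞) + 1))⁻¹ := by
    intro r hr
    have hdisj : Pairwise (Function.onFun Disjoint fun i => I ∩ C r i) := by
      intro i j hij
      rw [Function.onFun, Set.disjoint_left]
      rintro v ⟨hvI, hvC⟩ ⟨_, hvC'⟩
      exact hij (cntB_unique v hvI (hvC.trans hvC'.symm))
    have hunion : (⋃ i, I ∩ C r i) = I := by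
      apply Set.Subset.antisymm
      · exact Set.iUnion_subset fun i => Set.inter_subset_left
      · intro v hv
        obtain ⟨i, hi⟩ := cntB_exists v hv (by omega : r < n + 1)
        exact Set.mem_iUnion.2 ⟨i, hv, hi⟩
    have hIone : μ I = 1 := by
      have := measure_add_measure_compl (μ := μ) hImeas
      rw [hIc, add_zero] at this
      simpa using this
    have hsum : ∑ i : Fin (n+1), μ (I ∩ C r i) = 1 := by
      rw [← tsum_fintype (L := .unconditional _), ← measure_iUnion hdisj (fun i => hImeas.inter (hCmeas r i)),
        hunion, hIone]
    have hconst : ((n+1 : ℕ) : ℝ≥0∞) * μ (I ∩ C r (Fin.last n)) = 1 := by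
      rw [← hsum, Finset.sum_congr rfl (fun i _ => key1 r i), Finset.sum_const,
        Finset.card_univ, Fintype.card_fin, nsmul_eq_mul]
    have hCle : μ (C r (Fin.last n)) ≤ μ (I ∩ C r (Fin.last n)) := by
      calc μ (C r (Fin.last n)) ≤ μ ((I ∩ C r (Fin.last n)) ∪ Iᶜ) := by
            apply measure_mono
            intro v hv
            by_cases h : v ∈ I
            · exact Or.inl ⟨h, hv⟩
            · exact Or.inr h
        _ ≤ μ (I ∩ C r (Fin.last n)) + μ Iᶜ := measure_union_le _ _
        _ = μ (I ∩ C r (Fin.last n)) := by rw [hIc, add_zero]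
    refine hCle.trans ?_
    rw [ENNReal.le_inv_iff_mul_le]
    have hcast : ((n:ℝ≥0∞) + 1) = ((n+1 : ℕ) : ℝ≥0∞) := by push_cast; ring
    rw [hcast, mul_comm, hconst]
  -- rewrite the event via the order-statistic characterization
  have hevent : {ω | S (Fin.last n) ω ≤ kthSmallest n k (fun i => S i.castSucc ω)}
      = T ⁻¹' {v | cntB (Fin.last n) v < k} := by
    ext ω
    simp only [Set.mem_setOf_eq, Set.mem_preimage]
    rw [le_kthSmallest_iff hk1 hk]
    unfold cntB
    rw [show (Finset.univ.filter fun i : Fin n => S i.castSucc ω < S (Fin.last n) ω).card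
        = (Finset.univ.filter fun j : Fin (n+1) => T ω j < T ω (Fin.last n)).card from
      cnt_castSucc n (T ω)]
  have hUset : {v : Fin (n+1) → ℝ | cntB (Fin.last n) v < k}
      = ⋃ r ∈ Finset.range k, C r (Fin.last n) := by
    ext v
    simp only [Set.mem_setOf_eq, Set.mem_iUnion, Finset.mem_range, hCdef]
    exact ⟨fun h => ⟨cntB (Fin.last n) v, h, rfl⟩, fun ⟨r, hr, he⟩ => he ▸ hr⟩
  have hUmeas : MeasurableSet {v : Fin (n+1) → ℝ | cntB (Fin.last n) v < k} :=
    measurable_cntB _ (measurableSet_lt measurable_id measurable_const)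
  rw [hevent, ← Measure.map_apply hTmeas hUmeas, ← hμ, hUset]
  calc μ (⋃ r ∈ Finset.range k, C r (Fin.last n))
      ≤ ∑ r ∈ Finset.range k, μ (C r (Fin.last n)) := measure_biUnion_finset_le _ _
    _ ≤ ∑ _r ∈ Finset.range k, ((n:ℝ≥0∞) + 1)⁻¹ := by
        refine Finset.sum_le_sum fun r hr => key3 r ?_
        have := Finset.mem_range.1 hr
        omega
    _ = (k : ℝ≥0∞) * ((n:ℝ≥0∞) + 1)⁻¹ := by
        rw [Finset.sum_const, Finset.card_range, nsmul_eq_mul]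
    _ ≤ ENNReal.ofReal (1 - α + 1 / ((n : ℝ) + 1)) := by
        have hpos : (0:ℝ) < (n:ℝ) + 1 := by positivity
        have h1 : (k:ℝ) ≤ ((n:ℝ)+1)*(1-α) + 1 :=
          le_of_lt (Nat.ceil_lt_add_one (le_of_lt hx0))
        have h2 : (k:ℝ) * ((n:ℝ)+1)⁻¹ ≤ 1 - α + 1 / ((n:ℝ)+1) := by
          rw [← div_eq_mul_inv, div_le_iff₀ hpos]
          have hexp : (1 - α + 1/((n:ℝ)+1)) * ((n:ℝ)+1) = (1-α)*((n:ℝ)+1) + 1 := by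
            field_simp
          rw [hexp]
          nlinarith
        calc (k : ℝ≥0∞) * ((n:ℝ≥0∞) + 1)⁻¹
            = ENNReal.ofReal ((k:ℝ) * ((n:ℝ)+1)⁻¹) := by
              rw [ENNReal.ofReal_mul (by positivity), ENNReal.ofReal_natCast,
                ENNReal.ofReal_inv_of_pos hpos]
              congr 2
              rw [← ENNReal.ofReal_natCast n, ← ENNReal.ofReal_one,
                ← ENNReal.ofReal_add (by positivity) (by norm_num)]
          _ ≤ ENNReal.ofReal (1 - α + 1 / ((n : ℝ) + 1)) := ENNReal.ofReal_le_ofReal h2
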